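/- Deterministic asymptotics of the sparse MAP, nonzero coordinates: let β ∈ ℝ^p with ‖β‖₂ = 1, λ ≥ 0, c > 0, (σ_n) positive with σ_n → 0, (K_n) positive with σ_n K_n → c, and (β_n) a sequence of unit vectors with σ_n^{-1}(β_n − β) → 0. Define β̃_n coordinate-wise by β̃_{n,j} = S_λ(K_n β_{n,j}) and β_n^s = β̃_n/‖β̃_n‖₂. Then for every j with β_j ≠ 0, σ_n^{-1}(β^s_{n,j} − β_j) → (λ/c)(‖β‖₁ β_j − sign(β_j)). -/

import Mathlib

open Filter Topology

/-- Soft-thresholding (shrinkage) operator `S_λ(x) = sign(x)(|x| − λ) 1{|x| > λ}`. -/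
noncomputable def softThresh (lam x : ℝ) : ℝ :=
  Real.sign x * (|x| - lam) * (if lam < |x| then 1 else 0)

section helpers

lemma abs_softThresh_le (lam x : ℝ) (hlam : 0 ≤ lam) : |softThresh lam x| ≤ |x| := by
  unfold softThresh
  by_cases h : lam < |x|
  · simp only [h, if_pos, mul_one]
    have hx : x ≠ 0 := by
      intro h0; rw [h0, abs_zero] at h; exact absurd h (not_lt.2 hlam)
    rcases lt_trichotomy x 0 with h1 | h1 | h1
    · rw [Real.sign_of_neg h1]
      rw [abs_mul]
      simp only [abs_neg, abs_one, one_mul]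
      rw [abs_of_nonneg (by linarith : (0:ℝ) ≤ |x| - lam)]
      linarith
    · exact absurd h1 hx
    · rw [Real.sign_of_pos h1, one_mul,
        abs_of_nonneg (by linarith : (0:ℝ) ≤ |x| - lam)]
      linarith
  · simp [h]

lemma softThresh_of_lt (lam x : ℝ) (hlam : 0 ≤ lam) (h : lam < |x|) :
    softThresh lam x = x - lam * Real.sign x := by
  unfold softThresh
  have hx : x ≠ 0 := by
    intro h0; rw [h0, abs_zero] at h; exact absurd h (not_lt.2 hlam)
  simp only [h, if_pos, mul_one]
  rcases lt_trichotomy x 0 with h1 | h1 | h1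
  · rw [Real.sign_of_neg h1, abs_of_neg h1]; ring
  · exact absurd h1 hx
  · rw [Real.sign_of_pos h1, abs_of_pos h1]; ring

lemma sign_mul_pos (K x : ℝ) (hK : 0 < K) : Real.sign (K * x) = Real.sign x := by
  rcases lt_trichotomy x 0 with h1 | h1 | h1
  · rw [Real.sign_of_neg h1, Real.sign_of_neg (by exact mul_neg_of_pos_of_neg hK h1)]
  · simp [h1]
  · rw [Real.sign_of_pos h1, Real.sign_of_pos (by exact mul_pos hK h1)]

lemma self_mul_real_sign (x : ℝ) : x * Real.sign x = |x| := by
  rcases lt_trichotomy x 0 with h1 | h1 | h1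
  · rw [Real.sign_of_neg h1, abs_of_neg h1]; ring
  · simp [h1]
  · rw [Real.sign_of_pos h1, abs_of_pos h1]; ring

variable {E : Type*} [NormedAddCommGroup E] [InnerProductSpace ℝ E]

lemma hasFDerivAt_norm' (β : E) (hβ : ‖β‖ = 1) :
    HasFDerivAt (fun x : E => ‖x‖) (innerSL ℝ β) β := by
  have h1 : HasFDerivAt (fun x : E => ‖x‖ ^ 2) (2 • (innerSL ℝ β)) β :=
    (hasStrictFDerivAt_norm_sq β).hasFDerivAt
  have h2 := h1.sqrt (by rw [hβ]; norm_num)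
  have : (fun x : E => Real.sqrt (‖x‖ ^ 2)) = fun x : E => ‖x‖ := by
    funext x; rw [Real.sqrt_sq (norm_nonneg x)]
  rw [this] at h2
  convert h2 using 1
  rw [hβ]
  ext y
  simp [two_smul]
  ring

lemma hasFDerivAt_normalize (β : E) (hβ : ‖β‖ = 1) :
    HasFDerivAt (fun x : E => ‖x‖⁻¹ • x)
      (ContinuousLinearMap.id ℝ E - (innerSL ℝ β).smulRight β) β := by
  have hn := hasFDerivAt_norm' β hβ
  have hinv := (hasDerivAt_inv (by rw [hβ]; norm_num : ‖β‖ ≠ 0)).comp_hasFDerivAt β hn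
  have h := hinv.smul (hasFDerivAt_id β)
  convert h using 1
  ext y
  simp [hβ, sub_eq_add_neg]
  ext y
  simp [hβ, sub_eq_add_neg]

/-- Derivative along a sequence. -/
lemma tendsto_deriv_seq {F : Type*} [NormedAddCommGroup F] [NormedSpace ℝ F]
    {f : E → F} {L : E →L[ℝ] F} {β : E} (hf : HasFDerivAt f L β)
    {σ : ℕ → ℝ} (hσpos : ∀ n, 0 < σ n) (hσ : Tendsto σ atTop (𝓝 0))
    {d : ℕ → E} {d₀ : E} (hd : Tendsto d atTop (𝓝 d₀)) :
    Tendsto (fun n => (σ n)⁻¹ • (f (β + σ n • d n) - f β)) atTop (𝓝 (L d₀)) := by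
  have hh : Tendsto (fun n => σ n • d n) atTop (𝓝 (0 : E)) := by
    have := hσ.smul hd
    simpa using this
  have ho : (fun h : E => f (β + h) - f β - L h) =o[𝓝 0] fun h => h :=
    hasFDerivAt_iff_isLittleO_nhds_zero.1 hf
  have ho2 := ho.comp_tendsto hh
  -- (σ n • d n) =O σ
  have hOB : (fun n => σ n • d n) =O[atTop] σ := by
    apply Asymptotics.IsBigO.of_bound (‖d₀‖ + 1)
    have : ∀ᶠ n in atTop, ‖d n‖ ≤ ‖d₀‖ + 1 := by
      have := hd.norm.eventually (eventually_le_nhds (by linarith : ‖d₀‖ < ‖d₀‖ + 1))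
      exact this
    filter_upwards [this] with n hn
    rw [norm_smul]
    calc ‖σ n‖ * ‖d n‖ ≤ ‖σ n‖ * (‖d₀‖ + 1) := by
          exact mul_le_mul_of_nonneg_left hn (norm_nonneg _)
      _ = (‖d₀‖ + 1) * ‖σ n‖ := by ring
  have ho3 : (fun n => f (β + σ n • d n) - f β - L (σ n • d n)) =o[atTop] σ :=
    ho2.trans_isBigO hOB
  have key : Tendsto (fun n => (σ n)⁻¹ • (f (β + σ n • d n) - f β - L (σ n • d n)))
      atTop (𝓝 (0 : F)) := by
    rw [tendsto_zero_iff_norm_tendsto_zero]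
    have := (ho3.norm_left).trans_isBigO (Asymptotics.isBigO_refl σ atTop)
    rw [Asymptotics.isLittleO_iff_tendsto (fun n h => absurd h (hσpos n).ne')] at this
    refine this.congr fun n => ?_
    rw [norm_smul, norm_inv, Real.norm_eq_abs, abs_of_pos (hσpos n), div_eq_inv_mul]
  have lin : Tendsto (fun n => L (d n)) atTop (𝓝 (L d₀)) :=
    (L.continuous.tendsto _).comp hd
  have := key.add lin
  rw [zero_add] at this
  refine this.congr fun n => ?_
  have hσn := (hσpos n).ne'
  rw [map_smul, smul_sub]
  rw [smul_smul, inv_mul_cancel₀ hσn, one_smul]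
  abel

end helpers

theorem stmt10 {p : ℕ} (β : EuclideanSpace ℝ (Fin p)) (hβ : ‖β‖ = 1)
    (lam : ℝ) (hlam : 0 ≤ lam) (c : ℝ) (hc : 0 < c)
    (σ K : ℕ → ℝ) (hσpos : ∀ n, 0 < σ n) (hKpos : ∀ n, 0 < K n)
    (hσ : Tendsto σ atTop (𝓝 0))
    (hσK : Tendsto (fun n => σ n * K n) atTop (𝓝 c))
    (βn : ℕ → EuclideanSpace ℝ (Fin p)) (hβn : ∀ n, ‖βn n‖ = 1)
    (hβconv : Tendsto (fun n => (σ n)⁻¹ • (βn n - β)) atTop (𝓝 0))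
    (w : ℕ → EuclideanSpace ℝ (Fin p))
    (hw : ∀ n j, w n j = softThresh lam (K n * βn n j))
    (j : Fin p) (hj : β j ≠ 0) :
    Tendsto (fun n => (σ n)⁻¹ * ((‖w n‖⁻¹ • w n : EuclideanSpace ℝ (Fin p)) j - β j)) atTop
      (𝓝 ((lam / c) * ((∑ i, |β i|) * β j - Real.sign (β j)))) := by
  classical
  set S : EuclideanSpace ℝ (Fin p) :=
    (WithLp.equiv 2 (Fin p → ℝ)).symm (fun i => Real.sign (β i)) with hS
  have hSi : ∀ i, S i = Real.sign (β i) := fun i => rfl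
  set d₀ : EuclideanSpace ℝ (Fin p) := (-(lam / c)) • S with hd₀
  set a : ℕ → EuclideanSpace ℝ (Fin p) := fun n => (K n)⁻¹ • w n with ha
  set d : ℕ → EuclideanSpace ℝ (Fin p) := fun n => (σ n)⁻¹ • (a n - β) with hd
  have hd₀coord : ∀ i, d₀ i = -(lam / c) * Real.sign (β i) := by
    intro i
    rw [hd₀, PiLp.smul_apply, hSi, smul_eq_mul]
  -- coordinate-wise convergence facts
  have hε : ∀ i : Fin p, Tendsto (fun n => (σ n)⁻¹ * (βn n i - β i)) atTop (𝓝 0) := by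
    intro i
    have := ((EuclideanSpace.proj i :
        EuclideanSpace ℝ (Fin p) →L[ℝ] ℝ).continuous.tendsto _).comp hβconv
    simpa [EuclideanSpace.proj, Function.comp_def, PiLp.proj_apply, PiLp.smul_apply,
      PiLp.sub_apply, smul_eq_mul] using this
  have hKtop : Tendsto K atTop atTop := by
    have hσ' : Tendsto σ atTop (𝓝[>] 0) := by
      rw [tendsto_nhdsWithin_iff]
      exact ⟨hσ, Eventually.of_forall fun n => hσpos n⟩
    have hinv : Tendsto (fun n => (σ n)⁻¹) atTop atTop := hσ'.inv_tendsto_nhdsGT_zero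
    have := hσK.pos_mul_atTop hc hinv
    refine this.congr fun n => ?_
    show σ n * K n * (σ n)⁻¹ = K n
    rw [mul_comm (σ n) (K n), mul_assoc, mul_inv_cancel₀ (hσpos n).ne', mul_one]
  have hβni : ∀ i : Fin p, Tendsto (fun n => βn n i) atTop (𝓝 (β i)) := by
    intro i
    have := (hσ.mul (hε i)).const_add (β i)
    rw [mul_zero, add_zero] at this
    refine this.congr fun n => ?_
    rw [← mul_assoc, mul_inv_cancel₀ (hσpos n).ne', one_mul]
    ring
  have hσKinv : Tendsto (fun n => (σ n * K n)⁻¹) atTop (𝓝 c⁻¹) := hσK.inv₀ hc.ne'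
  -- coordinates of d converge
  have hcoord : ∀ i : Fin p, Tendsto (fun n => d n i) atTop (𝓝 (d₀ i)) := by
    intro i
    have hdni : ∀ n, d n i = (σ n)⁻¹ * ((K n)⁻¹ * softThresh lam (K n * βn n i) - β i) := by
      intro n
      rw [hd]
      simp only [ha, PiLp.smul_apply, PiLp.sub_apply, smul_eq_mul, hw n i]
    by_cases hi : β i = 0
    · rw [hd₀coord i, hi, Real.sign_zero, mul_zero]
      refine squeeze_zero_norm (a := fun n => |(σ n)⁻¹ * (βn n i - β i)|) (fun n => ?_) ?_
      · show ‖d n i‖ ≤ |(σ n)⁻¹ * (βn n i - β i)|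
        rw [hdni, hi, sub_zero, Real.norm_eq_abs, sub_zero]
        rw [abs_mul, abs_mul, abs_mul (σ n)⁻¹ (βn n i)]
        apply mul_le_mul_of_nonneg_left _ (abs_nonneg _)
        have h1 : |softThresh lam (K n * βn n i)| ≤ |K n * βn n i| :=
          abs_softThresh_le lam _ hlam
        calc |(K n)⁻¹| * |softThresh lam (K n * βn n i)|
            ≤ |(K n)⁻¹| * |K n * βn n i| :=
              mul_le_mul_of_nonneg_left h1 (abs_nonneg _)
          _ = |βn n i| := by
              rw [abs_mul, ← mul_assoc, ← abs_mul, inv_mul_cancel₀ (hKpos n).ne']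
              simp
      · have := (hε i).abs
        simpa using this
    · -- eventual formula
      have hev : ∀ᶠ n in atTop, d n i =
          (σ n)⁻¹ * (βn n i - β i) - lam * Real.sign (β i) * (σ n * K n)⁻¹ := by
        have h1 : ∀ᶠ n in atTop, |βn n i - β i| < |β i| / 2 := by
          have : Tendsto (fun n => |βn n i - β i|) atTop (𝓝 0) := by
            have := ((hβni i).sub_const (β i)).abs
            simpa using this
          exact this.eventually (eventually_lt_nhds (by positivity : (0:ℝ) < |β i| / 2))
        have h2 : ∀ᶠ n in atTop, 2 * (lam + 1) / |β i| ≤ K n :=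
          hKtop.eventually (eventually_ge_atTop _)
        filter_upwards [h1, h2] with n h1n h2n
        have hbig : |β i| / 2 < |βn n i| := by
          have := abs_sub_abs_le_abs_sub (β i) (βn n i)
          rw [abs_sub_comm] at h1n
          linarith
        have habs : (0:ℝ) < |β i| := abs_pos.2 hi
        have hKn := hKpos n
        have hlt : lam < |K n * βn n i| := by
          rw [abs_mul, abs_of_pos hKn]
          have hmul : 2 * (lam + 1) / |β i| * (|β i| / 2) ≤ K n * |βn n i| :=
            mul_le_mul h2n hbig.le (by positivity) (hKpos n).le
          have heq : 2 * (lam + 1) / |β i| * (|β i| / 2) = lam + 1 := by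
            field_simp
          rw [heq] at hmul
          linarith
        have hsign : Real.sign (βn n i) = Real.sign (β i) := by
          rcases lt_trichotomy (β i) 0 with hb | hb | hb
          · have : βn n i < 0 := by
              rw [abs_of_neg hb] at h1n hbig
              cases abs_lt.1 h1n with
              | intro l r => linarith
            rw [Real.sign_of_neg this, Real.sign_of_neg hb]
          · exact absurd hb hi
          · have : 0 < βn n i := by
              rw [abs_of_pos hb] at h1n
              cases abs_lt.1 h1n with
              | intro l r => linarith
            rw [Real.sign_of_pos this, Real.sign_of_pos hb]
        rw [hdni, softThresh_of_lt lam _ hlam hlt, sign_mul_pos _ _ hKn, hsign]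
        rw [mul_sub (K n)⁻¹, ← mul_assoc, inv_mul_cancel₀ (hKpos n).ne', one_mul,
          mul_inv (σ n) (K n)]
        ring
      have hlim : Tendsto
          (fun n => (σ n)⁻¹ * (βn n i - β i) - lam * Real.sign (β i) * (σ n * K n)⁻¹)
          atTop (𝓝 (0 - lam * Real.sign (β i) * c⁻¹)) :=
        (hε i).sub (hσKinv.const_mul _)
      rw [hd₀coord i]
      have h0 : 0 - lam * Real.sign (β i) * c⁻¹ = -(lam / c) * Real.sign (β i) := by ring
      rw [← h0]
      exact Tendsto.congr' (hev.mono fun n hn => hn.symm) hlim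
  -- vector convergence of d
  have hdconv : Tendsto d atTop (𝓝 d₀) := by
    let e := PiLp.continuousLinearEquiv 2 ℝ (fun _ : Fin p => ℝ)
    have hpi : Tendsto (fun n => e (d n)) atTop (𝓝 (e d₀)) :=
      tendsto_pi_nhds.2 fun i => hcoord i
    have := (e.symm.continuous.tendsto _).comp hpi
    rw [e.symm_apply_apply] at this
    exact this.congr fun n => e.symm_apply_apply (d n)
  -- derivative step
  set L : EuclideanSpace ℝ (Fin p) →L[ℝ] EuclideanSpace ℝ (Fin p) :=
    ContinuousLinearMap.id ℝ (EuclideanSpace ℝ (Fin p)) - (innerSL ℝ β).smulRight β with hL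
  have hF := tendsto_deriv_seq (hasFDerivAt_normalize β hβ) hσpos hσ hdconv
  have haeq : ∀ n, β + σ n • d n = a n := by
    intro n
    rw [hd]
    simp [smul_smul, mul_inv_cancel₀ (hσpos n).ne']
  have hFβ : ‖β‖⁻¹ • β = β := by rw [hβ]; simp
  have hFa : ∀ n, ‖a n‖⁻¹ • a n = ‖w n‖⁻¹ • w n := by
    intro n
    rw [ha]
    simp only [norm_smul, Real.norm_eq_abs, abs_of_pos (inv_pos.2 (hKpos n))]
    rw [mul_inv, inv_inv, smul_smul]
    rw [mul_comm (K n) ‖w n‖⁻¹, mul_assoc, mul_inv_cancel₀ (hKpos n).ne', mul_one]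
  have hF2 : Tendsto (fun n => (σ n)⁻¹ • ((‖w n‖⁻¹ • w n : EuclideanSpace ℝ (Fin p)) - β))
      atTop (𝓝 (L d₀)) := by
    refine hF.congr fun n => ?_
    rw [haeq n, hFβ, hFa n]
  -- project coordinate j
  have hj2 := ((EuclideanSpace.proj j :
      EuclideanSpace ℝ (Fin p) →L[ℝ] ℝ).continuous.tendsto _).comp hF2
  have hinner : (inner ℝ β d₀ : ℝ) = -(lam / c) * ∑ i, |β i| := by
    rw [hd₀, inner_smul_right]
    congr 1
    rw [PiLp.inner_apply]
    refine Finset.sum_congr rfl fun i _ => ?_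
    rw [hSi i]
    simp [RCLike.inner_apply, mul_comm, self_mul_real_sign]
  have hLj : (L d₀) j = d₀ j - (inner ℝ β d₀ : ℝ) * β j := by
    rw [hL]
    simp only [ContinuousLinearMap.sub_apply, ContinuousLinearMap.id_apply,
      ContinuousLinearMap.smulRight_apply, innerSL_apply_apply, PiLp.sub_apply,
      PiLp.smul_apply, smul_eq_mul]
  have hLd₀ : (L d₀) j = (lam / c) * ((∑ i, |β i|) * β j - Real.sign (β j)) := by
    rw [hLj, hinner, hd₀coord j]
    ring
  rw [← hLd₀]
  refine hj2.congr fun n => ?_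
  show (σ n)⁻¹ * ((‖w n‖⁻¹ • w n : EuclideanSpace ℝ (Fin p)) j - β j) =
    EuclideanSpace.proj j ((σ n)⁻¹ • ((‖w n‖⁻¹ • w n : EuclideanSpace ℝ (Fin p)) - β))
  simp [EuclideanSpace.proj, PiLp.proj_apply, PiLp.smul_apply, PiLp.sub_apply, smul_eq_mul]
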